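/- Let E^x_w be the set of indices i such that the i-th x in w is immediately followed by a y, and for T ⊆ E^x_w let ψ^x_T w be the word obtained by replacing each such xy (for i in T) by yx. Define Q_- w = Σ_{T ⊆ E^x_w} (−1)^{|T|} ψ^x_T w. Then for all words w, w0 in M_{n_x,n_y}: ⟨Q_- w | w0⟩ = 1 if w = w0 and 0 otherwise. Equivalently, Q_- intertwines the forms: u · v = ⟨Q_- u | v⟩. -/

import Mathlib

open scoped Classical

/-- Words over the two-letter alphabet {x,y}; `false` is `x`, `true` is `y`. -/
abbrev Word := List Bool

/-- 0-indexed positions of the x's (`false`) in a word. -/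
def xIdx (w : Word) : List ℕ :=
  (List.range w.length).filter (fun j => w.getD j true = false)

/-- 0-indexed positions of the y's (`true`) in a word. -/
def yIdx (w : Word) : List ℕ :=
  (List.range w.length).filter (fun j => w.getD j false = true)

/-- `fX w i` = number of y's strictly left of the i-th x of `w` (i is 0-indexed). -/
def fX (w : Word) (i : ℕ) : ℕ := (xIdx w).getD i 0 - i

/-- `fY w j` = number of x's strictly left of the j-th y of `w` (j is 0-indexed). -/
def fY (w : Word) (j : ℕ) : ℕ := (yIdx w).getD j 0 - j

/-- `hX w i` = (1-indexed) position of the i-th x of `w` (i is 0-indexed). -/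
def hX (w : Word) (i : ℕ) : ℕ := (xIdx w).getD i 0 + 1

/-- The pawn-move partial order: same letter counts, and each x of `w0` lies at a
position at most that of the corresponding x of `w1`. -/
def wle (w0 w1 : Word) : Prop :=
  w0.count false = w1.count false ∧ w0.count true = w1.count true ∧
  ∀ i < w0.count false, (xIdx w0).getD i 0 ≤ (xIdx w1).getD i 0

/-- Creation operator `a*_{s,i}` on words: `i = 0` prepends `s`; `1 ≤ i ≤ n_s`
replaces the i-th `s` by `ss`; `i = n_s + 1` appends `s`. -/
def create (s : Bool) : ℕ → Word → Word
  | 0, w => s :: w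
  | _+1, [] => [s]
  | i+1, a :: w =>
    if a = s then (if i = 0 then s :: s :: w else a :: create s i w)
    else a :: create s (i+1) w

/-- Delete the i-th occurrence (1-indexed) of `s`. -/
def delNth (s : Bool) : ℕ → Word → Word
  | _, [] => []
  | i, a :: w => if a = s then (if i ≤ 1 then w else a :: delNth s (i-1) w)
                 else a :: delNth s i w

/-- Annihilation operator `a_{s,i}` on words: `i = 0` deletes an initial `s` (else 0);
`1 ≤ i ≤ n_s` deletes the i-th `s`; `i = n_s + 1` deletes a final `s` (else 0). -/
def annih (s : Bool) (i : ℕ) (w : Word) : Option Word :=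
  if i = 0 then
    match w with
    | a :: t => if a = s then some t else none
    | [] => none
  else if i ≤ w.count s then some (delNth s i w)
  else if i = w.count s + 1 then
    if w.getLast? = some s then some w.dropLast else none
  else none

/-- The free ℤ-module on words: the Fock space `F`. -/
abbrev FS := Word →₀ ℤ

/-- Basis vector of a word. -/
noncomputable def δ (w : Word) : FS := Finsupp.single w 1

/-- `0` for `none`, basis vector for `some`. -/
noncomputable def optδ (o : Option Word) : FS := o.elim 0 δ

/-- Extend a word-indexed family of vectors to a linear map on `FS`. -/
noncomputable def opOf (g : Word → FS) : FS →ₗ[ℤ] FS := Finsupp.lift FS ℤ Word g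

/-- Creation operator as a linear map. -/
noncomputable def Cr (s : Bool) (i : ℕ) : FS →ₗ[ℤ] FS := opOf (fun w => δ (create s i w))

/-- Annihilation operator as a linear map. -/
noncomputable def An (s : Bool) (i : ℕ) : FS →ₗ[ℤ] FS := opOf (fun w => optδ (annih s i w))

/-- Boolean bilinear form on words: `1` if `w0 ≤ w1` in the pawn-move order, else `0`. -/
noncomputable def pairW (w0 w1 : Word) : ℤ := if wle w0 w1 then 1 else 0

/-- Bilinear extension of `pairW` to the free module. -/
noncomputable def pairF (u v : FS) : ℤ :=
  u.sum fun w0 a => v.sum fun w1 b => a * b * pairW w0 w1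

/-- Kronecker delta form on words. -/
noncomputable def dotW (w0 w1 : Word) : ℤ := if w0 = w1 then 1 else 0

/-- Bilinear extension of `dotW`: words form an orthonormal basis. -/
noncomputable def dotF (u v : FS) : ℤ :=
  u.sum fun w0 a => v.sum fun w1 b => a * b * dotW w0 w1

/-- All words of a given length. -/
noncomputable def wordsOfLen (n : ℕ) : Finset Word :=
  (Finset.univ : Finset (Fin n → Bool)).image List.ofFn

/-- Swap `xy → yx` at the x's whose (0-indexed) number lies in `T`;
the counter `k` records how many x's have been passed. -/
def psiX (T : Finset ℕ) : Word → ℕ → Word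
  | [], _ => []
  | false :: true :: w, k =>
      if k ∈ T then true :: false :: psiX T w (k+1)
      else false :: psiX T (true :: w) (k+1)
  | false :: w, k => false :: psiX T w (k+1)
  | true :: w, k => true :: psiX T w k
  termination_by w _ => w.length
  decreasing_by all_goals (simp <;> omega)

/-- Swap `yx → xy` at the y's whose (0-indexed) number lies in `T`. -/
def psiY (T : Finset ℕ) : Word → ℕ → Word
  | [], _ => []
  | true :: false :: w, k =>
      if k ∈ T then false :: true :: psiY T w (k+1)
      else true :: psiY T (false :: w) (k+1)
  | true :: w, k => true :: psiY T w (k+1)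
  | false :: w, k => false :: psiY T w k
  termination_by w _ => w.length
  decreasing_by all_goals (simp <;> omega)

/-- `Ex w`: 0-indexed numbers of the x's of `w` immediately followed by a y. -/
noncomputable def Ex (w : Word) : Finset ℕ :=
  (Finset.range (w.count false)).filter
    (fun i => w.getD ((xIdx w).getD i 0 + 1) false = true)

/-- `Ey w`: 0-indexed numbers of the y's of `w` immediately followed by an x. -/
noncomputable def Ey (w : Word) : Finset ℕ :=
  (Finset.range (w.count true)).filter
    (fun i => w.getD ((yIdx w).getD i 0 + 1) true = false)

/-- `Q_- w = Σ_{T ⊆ E^x_w} (−1)^{|T|} ψ^x_T w` on a word. -/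
noncomputable def QminusW (w : Word) : FS :=
  ∑ T ∈ (Ex w).powerset, ((-1 : ℤ)^T.card) • δ (psiX T w 0)

/-- `Q_-` extended linearly. -/
noncomputable def Qminus : FS →ₗ[ℤ] FS := opOf QminusW

lemma xIdx_cons (a : Bool) (w : Word) :
    xIdx (a :: w) = (if a = false then [0] else []) ++ (xIdx w).map (· + 1) := by
  unfold xIdx
  rw [List.length_cons, List.range_succ_eq_map, List.filter_cons, List.filter_map]
  have h2 : List.filter ((fun j => decide ((a :: w).getD j true = false)) ∘ Nat.succ)
      (List.range w.length)
      = List.filter (fun j => decide (w.getD j true = false)) (List.range w.length) :=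
    List.filter_congr (fun j _ => by simp [Function.comp])
  rw [h2]
  cases a <;> simp <;> rfl

lemma xIdx_length (w : Word) : (xIdx w).length = w.count false := by
  induction w with
  | nil => simp [xIdx]
  | cons a w ih => rw [xIdx_cons]; cases a <;> simp [ih, List.count_cons]

lemma mem_xIdx {w : Word} {p : ℕ} : p ∈ xIdx w ↔ p < w.length ∧ w.getD p true = false := by
  simp [xIdx, List.mem_filter, List.mem_range]

lemma xIdx_pairwise (w : Word) : (xIdx w).Pairwise (· < ·) :=
  List.Pairwise.sublist List.filter_sublist List.pairwise_lt_range

/-- Adjusted index list: bump the k-th-onward x positions that get swapped. -/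
def adj (w : Word) (T : Finset ℕ) : ℕ → List ℕ → List ℕ
  | _, [] => []
  | k, p :: ps => (if k ∈ T ∧ w.getD (p+1) false = true then p+1 else p) :: adj w T (k+1) ps

lemma adj_map_shift (a : Bool) (w : Word) (T : Finset ℕ) : ∀ (l : List ℕ) (k : ℕ),
    adj (a :: w) T k (l.map (· + 1)) = (adj w T k l).map (· + 1) := by
  intro l
  induction l with
  | nil => intro k; rfl
  | cons p ps ih =>
      intro k
      simp only [List.map_cons, adj, List.getD_cons_succ, ih]
      split <;> rfl

lemma adj_map_shift2 (a b : Bool) (w : Word) (T : Finset ℕ) (l : List ℕ) (k : ℕ) :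
    adj (a :: b :: w) T k (l.map (· + 2)) = (adj w T k l).map (· + 2) := by
  have h : ∀ m : List ℕ, m.map (· + 2) = (m.map (· + 1)).map (· + 1) := by
    intro m; rw [List.map_map]; rfl
  rw [h, adj_map_shift, adj_map_shift, ← h]

lemma xIdx_nil : xIdx [] = [] := rfl

lemma psiX_count (T : Finset ℕ) (b : Bool) : ∀ (w : Word) (k : ℕ),
    (psiX T w k).count b = w.count b := by
  intro w k
  induction w, k using psiX.induct T with
  | case1 k => simp [psiX]
  | case2 w k hk ih =>
      rw [show psiX T (false :: true :: w) k = true :: false :: psiX T w (k+1) from by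
        simp [psiX, hk]]
      cases b <;> simp [List.count_cons, ih]
  | case3 w k hk ih =>
      rw [show psiX T (false :: true :: w) k = false :: psiX T (true :: w) (k+1) from by
        simp [psiX, hk]]
      cases b <;> simp [List.count_cons, ih]
  | case4 w k hw ih =>
      match w, hw with
      | [], _ =>
          rw [show psiX T [false] k = false :: psiX T [] (k+1) from by simp [psiX]]
          cases b <;> simp [List.count_cons, ih]
      | false :: w', _ =>
          rw [show psiX T (false :: false :: w') k = false :: psiX T (false :: w') (k+1) from by
            simp [psiX]]
          cases b <;> simp [List.count_cons, ih]
      | true :: w', hw => exact absurd rfl (hw w')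
  | case5 w k ih =>
      rw [show psiX T (true :: w) k = true :: psiX T w k from by simp [psiX]]
      cases b <;> simp [List.count_cons, ih]

lemma psiX_xIdx (T : Finset ℕ) : ∀ (w : Word) (k : ℕ),
    xIdx (psiX T w k) = adj w T k (xIdx w) := by
  intro w k
  induction w, k using psiX.induct T with
  | case1 k => simp [psiX, xIdx, adj]
  | case2 w k hk ih =>
      rw [show psiX T (false :: true :: w) k = true :: false :: psiX T w (k+1) from by
        simp [psiX, hk]]
      simp [xIdx_cons, ih, adj, adj_map_shift, adj_map_shift2, hk]
      try (split <;> rfl)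
  | case3 w k hk ih =>
      rw [show psiX T (false :: true :: w) k = false :: psiX T (true :: w) (k+1) from by
        simp [psiX, hk]]
      simp [xIdx_cons, ih, adj, adj_map_shift, adj_map_shift2, hk]
      try (split <;> rfl)
  | case4 w k hw ih =>
      match w, hw with
      | [], _ =>
          rw [show psiX T [false] k = false :: psiX T [] (k+1) from by simp [psiX]]
          simp [xIdx_cons, ih, adj, adj_map_shift, adj_map_shift2, psiX, xIdx_nil]
          try (split <;> rfl)
      | false :: w', _ =>
          rw [show psiX T (false :: false :: w') k = false :: psiX T (false :: w') (k+1) from by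
            simp [psiX]]
          simp [xIdx_cons, ih, adj, adj_map_shift, adj_map_shift2]
          try (split <;> rfl)
      | true :: w', hw => exact absurd rfl (hw w')
  | case5 w k ih =>
      rw [show psiX T (true :: w) k = true :: psiX T w k from by simp [psiX]]
      simp [xIdx_cons, ih, adj, adj_map_shift, adj_map_shift2]
      try (split <;> rfl)

lemma adj_length (w : Word) (T : Finset ℕ) : ∀ (l : List ℕ) (k : ℕ),
    (adj w T k l).length = l.length := by
  intro l
  induction l with
  | nil => intro k; rfl
  | cons p ps ih => intro k; simp [adj, ih]

lemma adj_getD (w : Word) (T : Finset ℕ) : ∀ (l : List ℕ) (k i : ℕ), i < l.length →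
    (adj w T k l).getD i 0 =
      if (k+i) ∈ T ∧ w.getD (l.getD i 0 + 1) false = true then l.getD i 0 + 1
      else l.getD i 0 := by
  intro l
  induction l with
  | nil => intro k i h; simp at h
  | cons p ps ih =>
      intro k i h
      cases i with
      | zero => simp [adj]
      | succ i =>
          simp only [adj, List.getD_cons_succ]
          rw [ih (k+1) i (by simpa using h)]
          have : k + 1 + i = k + (i+1) := by omega
          rw [this]

lemma mem_Ex {w : Word} {i : ℕ} :
    i ∈ Ex w ↔ i < w.count false ∧ w.getD ((xIdx w).getD i 0 + 1) false = true := by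
  simp [Ex, Finset.mem_filter, Finset.mem_range, and_comm]

lemma psiX_getD {T : Finset ℕ} {w : Word} (hT : T ⊆ Ex w) {i : ℕ} (hi : i < w.count false) :
    (xIdx (psiX T w 0)).getD i 0 =
      if i ∈ T then (xIdx w).getD i 0 + 1 else (xIdx w).getD i 0 := by
  rw [psiX_xIdx, adj_getD w T (xIdx w) 0 i (by rw [xIdx_length]; exact hi), Nat.zero_add]
  by_cases h : i ∈ T
  · rw [if_pos ⟨h, (mem_Ex.1 (hT h)).2⟩, if_pos h]
  · rw [if_neg (fun hc => h hc.1), if_neg h]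

/-- strict set -/
noncomputable def Sset (w w0 : Word) : Finset ℕ :=
  (Ex w).filter (fun i => (xIdx w).getD i 0 < (xIdx w0).getD i 0)

lemma wle_psiX_iff {T : Finset ℕ} {w w0 : Word} (hT : T ⊆ Ex w) :
    wle (psiX T w 0) w0 ↔ (wle w w0 ∧ T ⊆ Sset w w0) := by
  constructor
  · rintro ⟨h1, h2, h3⟩
    rw [psiX_count] at h1 h2
    have hle : ∀ i < w.count false, (xIdx w).getD i 0 ≤ (xIdx w0).getD i 0 := by
      intro i hi
      have := h3 i (by rwa [psiX_count])
      rw [psiX_getD hT hi] at this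
      split at this <;> omega
    refine ⟨⟨h1, h2, hle⟩, ?_⟩
    intro i hiT
    have hiE := hT hiT
    have hi : i < w.count false := (mem_Ex.1 hiE).1
    have := h3 i (by rwa [psiX_count])
    rw [psiX_getD hT hi, if_pos hiT] at this
    exact Finset.mem_filter.2 ⟨hiE, by omega⟩
  · rintro ⟨⟨h1, h2, h3⟩, hTS⟩
    refine ⟨by rwa [psiX_count], by rwa [psiX_count], ?_⟩
    intro i hi
    rw [psiX_count] at hi
    rw [psiX_getD hT hi]
    by_cases h : i ∈ T
    · have := (Finset.mem_filter.1 (hTS h)).2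
      rw [if_pos h]; omega
    · rw [if_neg h]; exact h3 i hi

lemma length_eq_counts (w : Word) : w.length = w.count false + w.count true := by
  induction w with
  | nil => rfl
  | cons a w ih =>
      rw [List.length_cons, ih]
      cases a
      · rw [List.count_cons_self, List.count_cons_of_ne (by simp)]; omega
      · rw [List.count_cons_self, List.count_cons_of_ne (by simp)]; omega

lemma xIdx_getD_mem {w : Word} {i : ℕ} (hi : i < w.count false) :
    (xIdx w).getD i 0 ∈ xIdx w := by
  rw [List.getD_eq_getElem _ _ (by rw [xIdx_length]; exact hi)]
  exact List.getElem_mem _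

lemma xIdx_strict {w : Word} {i j : ℕ} (hij : i < j) (hj : j < w.count false) :
    (xIdx w).getD i 0 < (xIdx w).getD j 0 := by
  have hl : j < (xIdx w).length := by rw [xIdx_length]; exact hj
  have hi' : i < (xIdx w).length := lt_trans hij hl
  rw [List.getD_eq_getElem _ _ hi', List.getD_eq_getElem _ _ hl]
  have := List.pairwise_iff_get.1 (xIdx_pairwise w) ⟨i, hi'⟩ ⟨j, hl⟩ hij
  simpa using this

lemma xIdx_succ {w : Word} {i : ℕ} (hi : i < w.count false)
    (h2 : (xIdx w).getD i 0 + 1 ∈ xIdx w) :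
    i + 1 < w.count false ∧ (xIdx w).getD (i+1) 0 = (xIdx w).getD i 0 + 1 := by
  obtain ⟨j, hj, hje⟩ := List.mem_iff_getElem.1 h2
  have hjc : j < w.count false := by rwa [xIdx_length] at hj
  have hjD : (xIdx w).getD j 0 = (xIdx w).getD i 0 + 1 := by
    rw [List.getD_eq_getElem _ _ hj]; exact hje
  have hij : i < j := by
    rcases lt_trichotomy i j with h | rfl | h
    · exact h
    · omega
    · have := xIdx_strict h hi; omega
  have hji : j = i + 1 := by
    by_contra hc
    have h1 : i + 1 < j := by omega
    have h2' : i + 1 < w.count false := lt_trans h1 hjc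
    have ha := xIdx_strict (show i < i + 1 by omega) h2'
    have hb := xIdx_strict h1 hjc
    omega
  subst hji
  exact ⟨hjc, hjD⟩

lemma word_eq_of_xIdx {w w0 : Word} (hlen : w.length = w0.length)
    (hc : w.count false = w0.count false)
    (h : ∀ i < w.count false, (xIdx w).getD i 0 = (xIdx w0).getD i 0) : w = w0 := by
  have hx : xIdx w = xIdx w0 := by
    apply List.ext_getElem (by rw [xIdx_length, xIdx_length, hc])
    intro i h1 h2
    rw [← List.getD_eq_getElem _ 0 h1, ← List.getD_eq_getElem _ 0 h2]
    exact h i (by rwa [xIdx_length] at h1)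
  apply List.ext_getElem hlen
  intro p h1 h2
  have m1 : p ∈ xIdx w ↔ w[p] = false := by
    rw [mem_xIdx, List.getD_eq_getElem _ _ h1]; simp [h1]
  have m2 : p ∈ xIdx w0 ↔ w0[p] = false := by
    rw [mem_xIdx, List.getD_eq_getElem _ _ h2]; simp [h2]
  rw [hx] at m1
  have hiff := m1.symm.trans m2
  cases hb : w[p] <;> cases hb0 : w0[p] <;> simp [hb, hb0] at hiff ⊢

lemma wle_refl (w : Word) : wle w w := ⟨rfl, rfl, fun _ _ => le_refl _⟩

lemma Sset_empty_iff {w w0 : Word} (hle : wle w w0) : Sset w w0 = ∅ ↔ w = w0 := by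
  obtain ⟨h1, h2, h3⟩ := hle
  constructor
  · intro hS
    have hlen : w.length = w0.length := by
      rw [length_eq_counts, length_eq_counts, h1, h2]
    apply word_eq_of_xIdx hlen h1
    by_contra hc
    push_neg at hc
    obtain ⟨i0, hi0, hne⟩ := hc
    set D := (Finset.range (w.count false)).filter
      (fun i => (xIdx w).getD i 0 < (xIdx w0).getD i 0) with hD
    have hne' : D.Nonempty :=
      ⟨i0, Finset.mem_filter.2 ⟨Finset.mem_range.2 hi0, lt_of_le_of_ne (h3 i0 hi0) hne⟩⟩
    set i := D.max' hne' with hi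
    have hiD := Finset.mem_filter.1 (D.max'_mem hne')
    have hir : i < w.count false := Finset.mem_range.1 hiD.1
    have hilt : (xIdx w).getD i 0 < (xIdx w0).getD i 0 := hiD.2
    have hiE : i ∉ Ex w := by
      intro hE
      have : i ∈ Sset w w0 := Finset.mem_filter.2 ⟨hE, hilt⟩
      rw [hS] at this
      exact absurd this (Finset.notMem_empty i)
    rw [mem_Ex] at hiE
    push_neg at hiE
    have hnt := hiE hir
    have hp := mem_xIdx.1 (xIdx_getD_mem hir)
    by_cases hpl : (xIdx w).getD i 0 + 1 < w.length
    · have hgf : w.getD ((xIdx w).getD i 0 + 1) true = false := by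
        rw [List.getD_eq_getElem _ _ hpl]
        rw [List.getD_eq_getElem _ _ hpl] at hnt
        cases hval : w[(xIdx w).getD i 0 + 1] 
        · rfl
        · exact absurd hval hnt
      have hmem : (xIdx w).getD i 0 + 1 ∈ xIdx w := mem_xIdx.2 ⟨hpl, hgf⟩
      obtain ⟨hsc, hseq⟩ := xIdx_succ hir hmem
      have h4 : (xIdx w0).getD i 0 < (xIdx w0).getD (i+1) 0 :=
        xIdx_strict (Nat.lt_succ_self i) (h1 ▸ hsc)
      have hmemD : i+1 ∈ D := Finset.mem_filter.2 ⟨Finset.mem_range.2 hsc, by rw [hseq]; omega⟩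
      have := Finset.le_max' D _ hmemD
      omega
    · have hq := mem_xIdx.1 (xIdx_getD_mem (h1 ▸ hir))
      rw [← hlen] at hq
      omega
  · rintro rfl
    rw [Finset.eq_empty_iff_forall_notMem]
    intro i hiS
    exact absurd (Finset.mem_filter.1 hiS).2 (lt_irrefl _)

lemma pairF_delta (u : FS) (w0 : Word) :
    pairF u (δ w0) = u.sum fun a c => c * pairW a w0 := by
  unfold pairF δ
  refine Finsupp.sum_congr (fun a _ => ?_)
  rw [Finsupp.sum_single_index (by ring)]
  ring

noncomputable def Lp (w0 : Word) : FS →ₗ[ℤ] ℤ := Finsupp.lift ℤ ℤ Word (fun a => pairW a w0)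

lemma Lp_apply (w0 : Word) (u : FS) : Lp w0 u = pairF u (δ w0) := by
  rw [pairF_delta, Lp, Finsupp.lift_apply]
  exact Finsupp.sum_congr (fun a _ => by rw [smul_eq_mul])

lemma Lp_delta (w w0 : Word) : Lp w0 (δ w) = pairW w w0 := by
  rw [Lp, δ, Finsupp.lift_apply, Finsupp.sum_single_index (by simp), one_smul]

lemma key_lemma (w w0 : Word) :
    pairF (QminusW w) (δ w0) = if w = w0 then 1 else 0 := by
  rw [← Lp_apply, QminusW, map_sum]
  simp only [map_smul, Lp_delta, smul_eq_mul]
  by_cases hle : wle w w0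
  · have step : ∀ T ∈ (Ex w).powerset, (-1:ℤ)^T.card * pairW (psiX T w 0) w0
        = if T ⊆ Sset w w0 then (-1:ℤ)^T.card else 0 := by
      intro T hT
      have hT' : T ⊆ Ex w := Finset.mem_powerset.1 hT
      rw [pairW]
      by_cases hTS : T ⊆ Sset w w0
      · rw [if_pos ((wle_psiX_iff hT').2 ⟨hle, hTS⟩), if_pos hTS, mul_one]
      · rw [if_neg (fun hc => hTS ((wle_psiX_iff hT').1 hc).2), if_neg hTS, mul_zero]
    rw [Finset.sum_congr rfl step, ← Finset.sum_filter]
    have hfil : (Ex w).powerset.filter (· ⊆ Sset w w0) = (Sset w w0).powerset := by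
      ext T
      simp only [Finset.mem_filter, Finset.mem_powerset]
      exact ⟨fun h => h.2, fun h => ⟨h.trans (Finset.filter_subset _ _), h⟩⟩
    rw [hfil, Finset.sum_powerset_neg_one_pow_card,
      if_congr (Sset_empty_iff hle) rfl rfl]
  · have step : ∀ T ∈ (Ex w).powerset, (-1:ℤ)^T.card * pairW (psiX T w 0) w0 = 0 := by
      intro T hT
      rw [pairW, if_neg, mul_zero]
      exact fun hcon => hle ((wle_psiX_iff (Finset.mem_powerset.1 hT)).1 hcon).1
    rw [Finset.sum_congr rfl step, Finset.sum_const_zero, if_neg]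
    rintro rfl
    exact hle (wle_refl w)

lemma dotF_eq (u v : FS) : dotF u v = v.sum fun w1 b => b * u w1 := by
  unfold dotF
  rw [Finsupp.sum_comm]
  refine Finsupp.sum_congr (fun w1 _ => ?_)
  have h : ∀ w0 a, a * (v w1) * dotW w0 w1 = if w0 = w1 then a * (v w1) else 0 := by
    intro w0 a; unfold dotW; split <;> ring
  rw [show (Finsupp.sum u fun w0 a => a * v w1 * dotW w0 w1)
      = Finsupp.sum u fun w0 a => if w0 = w1 then a * v w1 else 0 from
    Finsupp.sum_congr (fun w0 _ => h w0 (u w0)), Finsupp.sum_ite_eq']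
  by_cases hm : w1 ∈ u.support
  · rw [if_pos hm]; ring
  · rw [if_neg hm, Finsupp.notMem_support_iff.1 hm, mul_zero]

lemma pairF_sum_right (u v : FS) : pairF u v = v.sum fun w1 b => b * pairF u (δ w1) := by
  unfold pairF
  rw [Finsupp.sum_comm]
  refine Finsupp.sum_congr (fun w1 _ => ?_)
  rw [show (Finsupp.sum u fun w0 a => Finsupp.sum (δ w1) fun w1' b => a * b * pairW w0 w1')
      = pairF u (δ w1) from rfl, pairF_delta, Finsupp.mul_sum]
  exact Finsupp.sum_congr (fun w0 _ => by ring)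

lemma opOf_delta (g : Word → FS) (w : Word) : opOf g (δ w) = g w := by
  unfold opOf δ
  rw [Finsupp.lift_apply, Finsupp.sum_single_index (by simp), one_smul]


/-- `⟨Q_- w | w0⟩ = 1` if `w = w0` and `0` otherwise; equivalently,
`Q_-` intertwines the Kronecker form with `⟨·|·⟩`: `u · v = ⟨Q_- u | v⟩`. -/
theorem stmt17 :
    (∀ w w0 : Word,
      pairF (QminusW w) (δ w0) = if w = w0 then 1 else 0) ∧
    (∀ u v : FS, dotF u v = pairF (Qminus u) v) := by
  refine ⟨key_lemma, fun u v => ?_⟩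
  rw [dotF_eq, pairF_sum_right]
  refine Finsupp.sum_congr (fun w1 _ => ?_)
  congr 1
  have hmaps : (Lp w1).comp Qminus = Finsupp.lapply w1 := by
    apply Finsupp.lhom_ext
    intro a b
    simp only [LinearMap.comp_apply, Finsupp.lapply_apply, Finsupp.single_apply]
    have h1 : Qminus (Finsupp.single a b) = b • QminusW a := by
      unfold Qminus opOf
      rw [Finsupp.lift_apply, Finsupp.sum_single_index (by simp)]
    rw [h1, map_smul, smul_eq_mul,
      show Lp w1 (QminusW a) = pairF (QminusW a) (δ w1) from Lp_apply w1 (QminusW a),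
      key_lemma a w1]
    split <;> ring
  have e1 : pairF (Qminus u) (δ w1) = (Lp w1).comp Qminus u := (Lp_apply w1 (Qminus u)).symm
  rw [e1, hmaps, Finsupp.lapply_apply]
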